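/- (Policy iteration convergence of values.) Let (π_k)_{k∈ℕ} be a sequence of full-support policies such that for every k and every state s the improvement objective satisfies J_{Q^{π_k}}(π_{k+1}, s) ≤ J_{Q^{π_k}}(π_k, s). Then for each (s,a) the sequence k ↦ Q^{π_k}(s,a) is nondecreasing and bounded above by (max_{(s,a)} r s a)/(1 − γ); consequently it converges to a finite limit. -/

import Mathlib

open scoped BigOperators

variable {S A : Type*}

/-- A policy has full support if it assigns positive probability to every action
in every state. -/
def FullSupport (π : S → PMF A) : Prop :=
  ∀ s a, 0 < ((π s) a).toReal

/-- The augmented Bellman operator of TransRL: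
`(T_π Q)(s,a) = r s a + γ · Σ_{s'} p(s'|s,a) · Σ_{a'} π(a'|s') ·
  (Q(s',a') + α · log(π_TC(a'|s') / π(a'|s')))`,
where terms with `π(a'|s') = 0` contribute `0`. -/
noncomputable def augBellman [Fintype S] [Fintype A]
    (p : S → A → PMF S) (r : S → A → ℝ) (γ α : ℝ) (πTC : S → PMF A)
    (π : S → PMF A) (Q : S → A → ℝ) : S → A → ℝ :=
  fun s a => r s a + γ * ∑ s' : S, ((p s a) s').toReal *
    ∑ a' : A, ((π s') a').toReal *
      (Q s' a' + α * Real.log (((πTC s') a').toReal / ((π s') a').toReal))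

/-- The per-state policy improvement objective
`J_Q(π, s) = Σ_a π(a|s) · (log π(a|s) − log π_TC(a|s) − Q(s,a)/α)`,
with terms where `π(a|s) = 0` contributing `0`. -/
noncomputable def impObj [Fintype A] (πTC : S → PMF A) (α : ℝ)
    (Q : S → A → ℝ) (π : S → PMF A) (s : S) : ℝ :=
  ∑ a : A, ((π s) a).toReal *
    (Real.log ((π s) a).toReal - Real.log (((πTC s) a).toReal) - Q s a / α)

/-- The auxiliary state value
`V(s) = Σ_a π(a|s) · (Q(s,a) + α · log(π_TC(a|s)/π(a|s)))`. -/
noncomputable def auxValue [Fintype A] (πTC : S → PMF A) (α : ℝ)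
    (Q : S → A → ℝ) (π : S → PMF A) (s : S) : ℝ :=
  ∑ a : A, ((π s) a).toReal *
    (Q s a + α * Real.log (((πTC s) a).toReal / ((π s) a).toReal))

/-- The soft (SAC) Bellman operator:
`(T^H_π Q)(s,a) = r s a + γ · Σ_{s'} p(s'|s,a) · Σ_{a'} π(a'|s') ·
  (Q(s',a') − α · log π(a'|s'))`. -/
noncomputable def softBellman [Fintype S] [Fintype A]
    (p : S → A → PMF S) (r : S → A → ℝ) (γ α : ℝ)
    (π : S → PMF A) (Q : S → A → ℝ) : S → A → ℝ :=
  fun s a => r s a + γ * ∑ s' : S, ((p s a) s').toReal *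
    ∑ a' : A, ((π s') a').toReal * (Q s' a' - α * Real.log (((π s') a').toReal))


section Helpers

variable [Fintype S] [Fintype A]

lemma pmf_sum_toReal {B : Type*} [Fintype B] (π : PMF B) :
    ∑ b : B, (π b).toReal = 1 := by
  have h := π.tsum_coe
  rw [tsum_fintype] at h
  rw [← ENNReal.toReal_sum (fun b _ => PMF.apply_ne_top π b), h, ENNReal.toReal_one]

lemma aug_mono (p : S → A → PMF S) (r : S → A → ℝ) {γ : ℝ} (α : ℝ)
    (hγ0 : 0 ≤ γ) (πTC π : S → PMF A) {Q Q' : S → A → ℝ}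
    (h : ∀ s a, Q s a ≤ Q' s a) :
    ∀ s a, augBellman p r γ α πTC π Q s a ≤ augBellman p r γ α πTC π Q' s a := by
  intro s a
  unfold augBellman
  refine add_le_add_right (mul_le_mul_of_nonneg_left ?_ hγ0) _
  refine Finset.sum_le_sum fun s' _ => mul_le_mul_of_nonneg_left ?_ ENNReal.toReal_nonneg
  refine Finset.sum_le_sum fun a' _ => mul_le_mul_of_nonneg_left ?_ ENNReal.toReal_nonneg
  exact add_le_add_left (h s' a') _

lemma aug_shift (p : S → A → PMF S) (r : S → A → ℝ) (γ α : ℝ)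
    (πTC π : S → PMF A) (Q : S → A → ℝ) (d : ℝ) :
    ∀ s a, augBellman p r γ α πTC π (fun s a => Q s a + d) s a
      = augBellman p r γ α πTC π Q s a + γ * d := by
  intro s a
  unfold augBellman
  have hin : ∀ s' : S,
      (∑ a' : A, ((π s') a').toReal * ((Q s' a' + d) +
        α * Real.log (((πTC s') a').toReal / ((π s') a').toReal)))
      = (∑ a' : A, ((π s') a').toReal * (Q s' a' +
        α * Real.log (((πTC s') a').toReal / ((π s') a').toReal))) + d := by
    intro s'
    calc (∑ a' : A, ((π s') a').toReal * ((Q s' a' + d) +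
          α * Real.log (((πTC s') a').toReal / ((π s') a').toReal)))
        = (∑ a' : A, (((π s') a').toReal * (Q s' a' +
            α * Real.log (((πTC s') a').toReal / ((π s') a').toReal))
            + ((π s') a').toReal * d)) := by
          exact Finset.sum_congr rfl fun a' _ => by ring
      _ = (∑ a' : A, ((π s') a').toReal * (Q s' a' +
            α * Real.log (((πTC s') a').toReal / ((π s') a').toReal)))
            + (∑ a' : A, ((π s') a').toReal) * d := by
          rw [Finset.sum_add_distrib, Finset.sum_mul]
      _ = _ := by rw [pmf_sum_toReal (π s'), one_mul]
  have hout : (∑ s' : S, ((p s a) s').toReal *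
      (∑ a' : A, ((π s') a').toReal * ((Q s' a' + d) +
        α * Real.log (((πTC s') a').toReal / ((π s') a').toReal))))
      = (∑ s' : S, ((p s a) s').toReal *
      (∑ a' : A, ((π s') a').toReal * (Q s' a' +
        α * Real.log (((πTC s') a').toReal / ((π s') a').toReal)))) + d := by
    calc (∑ s' : S, ((p s a) s').toReal *
        (∑ a' : A, ((π s') a').toReal * ((Q s' a' + d) +
          α * Real.log (((πTC s') a').toReal / ((π s') a').toReal))))
        = (∑ s' : S, (((p s a) s').toReal *
          (∑ a' : A, ((π s') a').toReal * (Q s' a' +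
            α * Real.log (((πTC s') a').toReal / ((π s') a').toReal)))
          + ((p s a) s').toReal * d)) := by
          refine Finset.sum_congr rfl fun s' _ => ?_
          rw [hin s']; ring
      _ = _ := by
          rw [Finset.sum_add_distrib, ← Finset.sum_mul, pmf_sum_toReal (p s a), one_mul]
  rw [hout]; ring

lemma aug_le_fixed [Nonempty S] [Nonempty A]
    (p : S → A → PMF S) (r : S → A → ℝ) {γ : ℝ} (α : ℝ)
    (hγ0 : 0 ≤ γ) (hγ1 : γ < 1) (πTC π : S → PMF A) {Q P : S → A → ℝ}
    (hQ : ∀ s a, Q s a ≤ augBellman p r γ α πTC π Q s a)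
    (hP : ∀ s a, augBellman p r γ α πTC π P s a ≤ P s a) :
    ∀ s a, Q s a ≤ P s a := by
  set c : ℝ := max 0 (Finset.sup' Finset.univ Finset.univ_nonempty
    (fun sa : S × A => Q sa.1 sa.2 - P sa.1 sa.2)) with hc
  have hc0 : 0 ≤ c := le_max_left _ _
  have key : ∀ n : ℕ, ∀ s a, Q s a ≤ P s a + γ ^ n * c := by
    intro n
    induction n with
    | zero =>
      intro s a
      have h1 : Q s a - P s a ≤ c :=
        le_trans (Finset.le_sup' (fun sa : S × A => Q sa.1 sa.2 - P sa.1 sa.2)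
          (Finset.mem_univ (s, a))) (le_max_right _ _)
      simpa using by linarith
    | succ n ih =>
      intro s a
      calc Q s a ≤ augBellman p r γ α πTC π Q s a := hQ s a
        _ ≤ augBellman p r γ α πTC π (fun s a => P s a + γ ^ n * c) s a :=
            aug_mono p r α hγ0 πTC π ih s a
        _ = augBellman p r γ α πTC π P s a + γ * (γ ^ n * c) :=
            aug_shift p r γ α πTC π P (γ ^ n * c) s a
        _ ≤ P s a + γ ^ (n + 1) * c := by
            have := hP s a
            have hpow : γ * (γ ^ n * c) = γ ^ (n + 1) * c := by ring
            linarith [hpow.le, hpow.ge]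
  intro s a
  have hlim : Filter.Tendsto (fun n : ℕ => P s a + γ ^ n * c) Filter.atTop (nhds (P s a)) := by
    have h0 : Filter.Tendsto (fun n : ℕ => γ ^ n) Filter.atTop (nhds 0) :=
      tendsto_pow_atTop_nhds_zero_of_lt_one hγ0 hγ1
    have := (h0.mul_const c).const_add (P s a)
    simpa using this
  exact ge_of_tendsto' hlim (fun n => key n s a)

lemma kl_nonpos {B : Type*} [Fintype B] (πTC π : PMF B)
    (hTC : ∀ b, 0 < (πTC b).toReal) (hπ : ∀ b, 0 < (π b).toReal) :
    ∑ b : B, (π b).toReal * Real.log ((πTC b).toReal / (π b).toReal) ≤ 0 := by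
  have h : ∀ b : B, (π b).toReal * Real.log ((πTC b).toReal / (π b).toReal)
      ≤ (πTC b).toReal - (π b).toReal := by
    intro b
    have hpos : 0 < (πTC b).toReal / (π b).toReal := div_pos (hTC b) (hπ b)
    have hlog := Real.log_le_sub_one_of_pos hpos
    have h2 := mul_le_mul_of_nonneg_left hlog (hπ b).le
    calc (π b).toReal * Real.log ((πTC b).toReal / (π b).toReal)
        ≤ (π b).toReal * ((πTC b).toReal / (π b).toReal - 1) := h2
      _ = (πTC b).toReal - (π b).toReal := by
          rw [mul_sub, mul_one, mul_div_cancel₀ _ (hπ b).ne']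
  calc ∑ b : B, (π b).toReal * Real.log ((πTC b).toReal / (π b).toReal)
      ≤ ∑ b : B, ((πTC b).toReal - (π b).toReal) := Finset.sum_le_sum fun b _ => h b
    _ = 0 := by rw [Finset.sum_sub_distrib, pmf_sum_toReal, pmf_sum_toReal, sub_self]

lemma auxValue_eq_neg (πTC : S → PMF A) {α : ℝ} (hα : α ≠ 0)
    (Q : S → A → ℝ) (π : S → PMF A)
    (hTC : FullSupport πTC) (hπ : FullSupport π) (s : S) :
    auxValue πTC α Q π s = -α * impObj πTC α Q π s := by
  unfold auxValue impObj
  rw [Finset.mul_sum]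
  refine Finset.sum_congr rfl fun a _ => ?_
  rw [Real.log_div (hTC s a).ne' (hπ s a).ne']
  field_simp
  ring

lemma augBellman_eq_auxValue (p : S → A → PMF S) (r : S → A → ℝ) (γ α : ℝ)
    (πTC π : S → PMF A) (Q : S → A → ℝ) (s : S) (a : A) :
    augBellman p r γ α πTC π Q s a
      = r s a + γ * ∑ s' : S, ((p s a) s').toReal * auxValue πTC α Q π s' := rfl

end Helpers

theorem policy_iteration_values_converge [Fintype S] [Fintype A] [Nonempty S] [Nonempty A]
    (p : S → A → PMF S) (r : S → A → ℝ) (γ α : ℝ)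
    (hγ0 : 0 ≤ γ) (hγ1 : γ < 1) (hα : 0 < α)
    (πTC : S → PMF A) (hTC : FullSupport πTC)
    (πseq : ℕ → S → PMF A) (hπ : ∀ k, FullSupport (πseq k))
    (Qseq : ℕ → S → A → ℝ)
    (hfix : ∀ k, augBellman p r γ α πTC (πseq k) (Qseq k) = Qseq k)
    (hJ : ∀ k s,
      impObj πTC α (Qseq k) (πseq (k + 1)) s ≤ impObj πTC α (Qseq k) (πseq k) s) :
    ∀ s a, Monotone (fun k => Qseq k s a) ∧
      (∀ k, Qseq k s a ≤ (⨆ sa : S × A, r sa.1 sa.2) / (1 - γ)) ∧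
      ∃ L : ℝ, Filter.Tendsto (fun k => Qseq k s a) Filter.atTop (nhds L) := by
  have h1γ : 0 < 1 - γ := by linarith
  set M : ℝ := ⨆ sa : S × A, r sa.1 sa.2 with hM
  set C : ℝ := M / (1 - γ) with hCdef
  have hrM : ∀ s a, r s a ≤ M := fun s a =>
    le_ciSup (f := fun sa : S × A => r sa.1 sa.2)
      (Set.Finite.bddAbove (Set.finite_range _)) (s, a)
  -- T applied to constant C is ≤ C
  have hTC_C : ∀ k s a, augBellman p r γ α πTC (πseq k) (fun _ _ => C) s a ≤ C := by
    intro k s a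
    unfold augBellman
    have hin : ∀ s' : S, (∑ a' : A, ((πseq k s') a').toReal *
        (C + α * Real.log (((πTC s') a').toReal / ((πseq k s') a').toReal))) ≤ C := by
      intro s'
      have hkl := kl_nonpos (πTC s') (πseq k s') (fun b => hTC s' b) (fun b => hπ k s' b)
      calc (∑ a' : A, ((πseq k s') a').toReal *
            (C + α * Real.log (((πTC s') a').toReal / ((πseq k s') a').toReal)))
          = (∑ a' : A, ((πseq k s') a').toReal) * C + α *
            ∑ a' : A, ((πseq k s') a').toReal *
              Real.log (((πTC s') a').toReal / ((πseq k s') a').toReal) := by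
            rw [Finset.sum_mul, Finset.mul_sum, ← Finset.sum_add_distrib]
            exact Finset.sum_congr rfl fun a' _ => by ring
        _ = C + α * ∑ a' : A, ((πseq k s') a').toReal *
              Real.log (((πTC s') a').toReal / ((πseq k s') a').toReal) := by
            rw [pmf_sum_toReal (πseq k s'), one_mul]
        _ ≤ C + α * 0 := add_le_add_right (mul_le_mul_of_nonneg_left hkl hα.le) C
        _ = C := by ring
    have hout : (∑ s' : S, ((p s a) s').toReal *
        ∑ a' : A, ((πseq k s') a').toReal *
          (C + α * Real.log (((πTC s') a').toReal / ((πseq k s') a').toReal))) ≤ C := by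
      calc (∑ s' : S, ((p s a) s').toReal *
          ∑ a' : A, ((πseq k s') a').toReal *
            (C + α * Real.log (((πTC s') a').toReal / ((πseq k s') a').toReal)))
          ≤ ∑ s' : S, ((p s a) s').toReal * C :=
            Finset.sum_le_sum fun s' _ =>
              mul_le_mul_of_nonneg_left (hin s') ENNReal.toReal_nonneg
        _ = C := by rw [← Finset.sum_mul, pmf_sum_toReal (p s a), one_mul]
    calc r s a + γ * (∑ s' : S, ((p s a) s').toReal *
          ∑ a' : A, ((πseq k s') a').toReal *
            (C + α * Real.log (((πTC s') a').toReal / ((πseq k s') a').toReal)))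
        ≤ M + γ * C := add_le_add (hrM s a) (mul_le_mul_of_nonneg_left hout hγ0)
      _ = C := by rw [hCdef]; field_simp; ring
  have hbound : ∀ k s a, Qseq k s a ≤ C := by
    intro k
    refine aug_le_fixed p r α hγ0 hγ1 πTC (πseq k) ?_ ?_
    · intro s a
      exact le_of_eq (congrFun (congrFun (hfix k) s) a).symm
    · intro s a
      exact hTC_C k s a
  have hstep : ∀ k s a, Qseq k s a ≤ Qseq (k + 1) s a := by
    intro k
    refine aug_le_fixed p r α hγ0 hγ1 πTC (πseq (k + 1)) ?_ ?_
    · intro s a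
      have hfx := congrFun (congrFun (hfix k) s) a
      rw [← hfx]
      rw [augBellman_eq_auxValue, augBellman_eq_auxValue]
      have haux : ∀ s' : S, auxValue πTC α (Qseq k) (πseq k) s'
          ≤ auxValue πTC α (Qseq k) (πseq (k + 1)) s' := by
        intro s'
        rw [auxValue_eq_neg πTC hα.ne' _ _ hTC (hπ k),
            auxValue_eq_neg πTC hα.ne' _ _ hTC (hπ (k + 1))]
        have hj := hJ k s'
        nlinarith
      refine add_le_add_right (mul_le_mul_of_nonneg_left ?_ hγ0) _
      exact Finset.sum_le_sum fun s' _ =>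
        mul_le_mul_of_nonneg_left (haux s') ENNReal.toReal_nonneg
    · intro s a
      exact le_of_eq (congrFun (congrFun (hfix (k + 1)) s) a)
  intro s a
  have hmono : Monotone fun k => Qseq k s a :=
    monotone_nat_of_le_succ fun k => hstep k s a
  refine ⟨hmono, fun k => hbound k s a, ?_⟩
  have hbdd : BddAbove (Set.range fun k => Qseq k s a) := by
    refine ⟨C, ?_⟩
    rintro x ⟨k, rfl⟩
    exact hbound k s a
  exact ⟨_, tendsto_atTop_ciSup hmono hbdd⟩
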